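/- Let t ≥ 0 and D ≥ 1 be integers and let T_D(t) be the model 𝒢-complex described below, with fundamental class f_t (equal to (1+j)c_t if t > 0 and to c₀ if t = 0). Then there exist no elements y₁ ∈ T_D(t) of degree t+1 and y₂ ∈ T_D(t) of degree t+2 such that ∂y₁ = f_t and ∂y₂ = (1+j)y₁. -/
import Mathlib


/-! The model 𝒢-complex `T_D(t)` over `𝔽 = ℤ/2ℤ`: a fixed part with basis
`c₀, c₁, jc₁, …, c_t, jc_t` (with `jc₀ = c₀`, `j²cᵢ = cᵢ`, `scᵢ = 0`, `∂c₁ = c₀`,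
`∂cᵢ = (1+j)c_{i-1}`), together with a free `𝒢`-module on generators
`x_{t+1}, x_{t+3}, …, x_{t+2D-1}` (so with `𝔽`-basis the monomials `jᵃ x_k` and
`jᵃ s x_k`, `0 ≤ a ≤ 3`), with `∂x_{t+1} = f_t` and `∂x_{t+2i+1} = s(1+j²)x_{t+2i-1}`. -/

/-- The `𝔽`-basis of `T_D(t)`: `c0` is the cell `c₀`; `c i ε` is `c_{i+1}` (for
`ε = false`) or `j c_{i+1}` (for `ε = true`), `0 ≤ i ≤ t-1`; `x k a b` is the monomial
`jᵃ sᵇ x_{t+2k+1}`, `0 ≤ k ≤ D-1`, `a ∈ ℤ/4`, `b ∈ {0,1}`. -/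
inductive TBasis (t D : ℕ) : Type
  | c0 : TBasis t D
  | c : Fin t → Bool → TBasis t D
  | x : Fin D → Fin 4 → Bool → TBasis t D
deriving DecidableEq

/-- The underlying `𝔽`-vector space of the model complex `T_D(t)`. -/
abbrev TModel (t D : ℕ) : Type := TBasis t D →₀ ZMod 2

namespace TModel

variable {t D : ℕ}

/-- The degree of a basis element. -/
def degT : TBasis t D → ℕ
  | .c0 => 0
  | .c i _ => i.1 + 1
  | .x k _ b => t + 2*k.1 + 1 + (if b then 1 else 0)

/-- The degree-`n` graded piece of `T_D(t)`. -/
noncomputable def gradeT (t D : ℕ) (n : ℕ) : Submodule (ZMod 2) (TModel t D) where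
  carrier := {m | ∀ e ∈ m.support, degT e = n}
  add_mem' := by
    intro a b ha hb e he
    rcases Finset.mem_union.mp (Finsupp.support_add he) with h | h
    · exact ha e h
    · exact hb e h
  zero_mem' := by intro e he; simp at he
  smul_mem' := by
    intro c a ha e he
    exact ha e (Finsupp.support_smul he)

/-- The fundamental class `f_t`: `(1+j)c_t` if `t > 0`, and `c₀` if `t = 0`. -/
noncomputable def fT (t D : ℕ) : TModel t D :=
  if h : t = 0 then Finsupp.single .c0 1
  else
    Finsupp.single (.c ⟨t - 1, by omega⟩ false) 1 +
      Finsupp.single (.c ⟨t - 1, by omega⟩ true) 1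

/-- The differential on basis elements: `∂c₀ = 0`, `∂c₁ = ∂(jc₁) = c₀`,
`∂cᵢ = ∂(jcᵢ) = (1+j)c_{i-1}` for `i ≥ 2`; on the free part, `∂(jᵃ s x_k) =
jᵃ(1+j²)x_k`, `∂(jᵃ x_{t+1}) = jᵃ f_t = f_t`, and `∂(jᵃ x_{t+2k+1}) =
jᵃ(1+j²) s x_{t+2k-1}` for `k ≥ 1`. -/
noncomputable def dFun (t D : ℕ) : TBasis t D → TModel t D
  | .c0 => 0
  | .c i _ =>
    if i.1 = 0 then Finsupp.single .c0 1
    else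
      Finsupp.single (.c ⟨i.1 - 1, Nat.lt_of_le_of_lt (Nat.sub_le i.1 1) i.2⟩ false) 1 +
        Finsupp.single (.c ⟨i.1 - 1, Nat.lt_of_le_of_lt (Nat.sub_le i.1 1) i.2⟩ true) 1
  | .x k a b =>
    if b then
      Finsupp.single (.x k a false) 1 + Finsupp.single (.x k (a + 2) false) 1
    else if k.1 = 0 then fT t D
    else
      Finsupp.single (.x ⟨k.1 - 1, Nat.lt_of_le_of_lt (Nat.sub_le k.1 1) k.2⟩ a true) 1 +
        Finsupp.single (.x ⟨k.1 - 1, Nat.lt_of_le_of_lt (Nat.sub_le k.1 1) k.2⟩ (a + 2) true) 1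

/-- The action of `j` on basis elements: `jc₀ = c₀`, `j` swaps `cᵢ ↔ jcᵢ`, and
`j·(jᵃ sᵇ x_k) = j^{a+1} sᵇ x_k`. -/
noncomputable def jFun (t D : ℕ) : TBasis t D → TModel t D
  | .c0 => Finsupp.single .c0 1
  | .c i ε => Finsupp.single (.c i (!ε)) 1
  | .x k a b => Finsupp.single (.x k (a + 1) b) 1

/-- The action of `s` on basis elements: `s` kills the fixed part, `s·(jᵃ x_k) =
j^{-a} s x_k`, `s·(jᵃ s x_k) = 0`. -/
noncomputable def sFun (t D : ℕ) : TBasis t D → TModel t D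
  | .c0 => 0
  | .c _ _ => 0
  | .x k a b => if b then 0 else Finsupp.single (.x k (-a) true) 1

/-- The differential of `T_D(t)`, extended linearly. -/
noncomputable def dT (t D : ℕ) : TModel t D →ₗ[ZMod 2] TModel t D :=
  Finsupp.lift (TModel t D) (ZMod 2) (TBasis t D) (dFun t D)

/-- The operator `j` of `T_D(t)`, extended linearly. -/
noncomputable def jT (t D : ℕ) : TModel t D →ₗ[ZMod 2] TModel t D :=
  Finsupp.lift (TModel t D) (ZMod 2) (TBasis t D) (jFun t D)

/-- The operator `s` of `T_D(t)`, extended linearly. -/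
noncomputable def sT (t D : ℕ) : TModel t D →ₗ[ZMod 2] TModel t D :=
  Finsupp.lift (TModel t D) (ZMod 2) (TBasis t D) (sFun t D)

lemma grade_apply_eq_zero {n : ℕ} {y : TModel t D} (h : y ∈ gradeT t D n)
    {e : TBasis t D} (he : degT e ≠ n) : y e = 0 := by
  by_contra h0
  exact he (h e (Finsupp.mem_support_iff.mpr h0))

lemma dT_single (e : TBasis t D) (c : ZMod 2) :
    dT t D (Finsupp.single e c) = c • dFun t D e := by
  simp [dT, Finsupp.lift_apply, Finsupp.sum_single_index]

lemma jT_single (e : TBasis t D) (c : ZMod 2) :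
    jT t D (Finsupp.single e c) = c • jFun t D e := by
  simp [jT, Finsupp.lift_apply, Finsupp.sum_single_index]

lemma fT_ne_zero : fT t D ≠ 0 := by
  unfold fT
  split
  · intro h
    have := congrArg (fun m : TModel t D => m .c0) h
    simp at this
  · rename_i ht
    intro h
    have := congrArg (fun m : TModel t D => m (.c ⟨t - 1, by omega⟩ false)) h
    simp [Finsupp.single_apply] at this

lemma rep1 (hD : 0 < D) {y : TModel t D} (h : y ∈ gradeT t D (t + 1)) :
    y = ∑ a : Fin 4, Finsupp.single (.x ⟨0, hD⟩ a false)
      (y (.x ⟨0, hD⟩ a false)) := by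
  ext e
  rw [Finset.sum_apply']
  cases e with
  | c0 =>
      rw [grade_apply_eq_zero h (by simp [degT])]
      simp [Finsupp.single_apply]
  | c i ε =>
      rw [grade_apply_eq_zero h (by simp [degT]; omega)]
      simp [Finsupp.single_apply]
  | x k a b =>
      by_cases hk : k.1 = 0 ∧ b = false
      · obtain ⟨hk0, hb⟩ := hk
        have hkk : k = ⟨0, hD⟩ := Fin.ext hk0
        subst hkk hb
        simp [Finsupp.single_apply]
      · rw [grade_apply_eq_zero h (by
          simp [degT]
          rcases b with _ | _ <;> simp_all <;> omega)]
        symm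
        apply Finset.sum_eq_zero
        intro a' _
        rw [Finsupp.single_apply, if_neg]
        intro hx
        injection hx with h1 h2 h3
        exact hk ⟨by rw [← h1], by rw [h3]⟩

lemma rep2 (hD : 0 < D) {y : TModel t D} (h : y ∈ gradeT t D (t + 2)) :
    y = ∑ a : Fin 4, Finsupp.single (.x ⟨0, hD⟩ a true)
      (y (.x ⟨0, hD⟩ a true)) := by
  ext e
  rw [Finset.sum_apply']
  cases e with
  | c0 =>
      rw [grade_apply_eq_zero h (by simp [degT])]
      simp [Finsupp.single_apply]
  | c i ε =>
      rw [grade_apply_eq_zero h (by simp [degT]; omega)]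
      simp [Finsupp.single_apply]
  | x k a b =>
      by_cases hk : k.1 = 0 ∧ b = true
      · obtain ⟨hk0, hb⟩ := hk
        have hkk : k = ⟨0, hD⟩ := Fin.ext hk0
        subst hkk hb
        simp [Finsupp.single_apply]
      · rw [grade_apply_eq_zero h (by
          simp [degT]
          rcases b with _ | _ <;> simp_all <;> omega)]
        symm
        apply Finset.sum_eq_zero
        intro a' _
        rw [Finsupp.single_apply, if_neg]
        intro hx
        injection hx with h1 h2 h3
        exact hk ⟨by rw [← h1], by rw [h3]⟩

end TModel

open TModel in
/-- in the model complex `T_D(t)` (with `D ≥ 1`) there are no elements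
`y₁` of degree `t+1` and `y₂` of degree `t+2` such that `∂y₁ = f_t` and
`∂y₂ = (1+j)y₁`. -/
theorem stmt_15 (t D : ℕ) (hD : 1 ≤ D) :
    ¬ ∃ (y₁ y₂ : TModel t D),
        y₁ ∈ gradeT t D (t + 1) ∧ y₂ ∈ gradeT t D (t + 2) ∧
        dT t D y₁ = fT t D ∧ dT t D y₂ = y₁ + jT t D y₁ := by
  rintro ⟨y₁, y₂, h1, h2, hd1, hd2⟩
  have hD0 : 0 < D := hD
  have hy₁ := rep1 hD0 h1
  have hy₂ := rep2 hD0 h2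
  -- clean forms of the differential and j on the relevant basis elements
  have hdE : ∀ a : Fin 4, dFun t D (.x ⟨0, hD0⟩ a false) = fT t D := by
    intro a; simp [dFun]
  have hdF : ∀ a : Fin 4, dFun t D (.x ⟨0, hD0⟩ a true) =
      Finsupp.single (.x ⟨0, hD0⟩ a false) 1 +
        Finsupp.single (.x ⟨0, hD0⟩ (a + 2) false) 1 := by
    intro a; simp [dFun]
  have hjE : ∀ a : Fin 4, jFun t D (.x ⟨0, hD0⟩ a false) =
      Finsupp.single (.x ⟨0, hD0⟩ (a + 1) false) 1 := by
    intro a; simp [jFun]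
  -- step 1: the sum of the coefficients of y₁ is 1
  rw [hy₁, map_sum] at hd1
  simp only [dT_single, hdE, ← Finset.sum_smul] at hd1
  have hS : (∑ a : Fin 4, y₁ (.x ⟨0, hD0⟩ a false)) = 1 := by
    rcases (show ∀ s : ZMod 2, s = 0 ∨ s = 1 by decide)
        (∑ a : Fin 4, y₁ (.x ⟨0, hD0⟩ a false)) with h | h
    · rw [h, zero_smul] at hd1
      exact absurd hd1.symm fT_ne_zero
    · exact h
  -- step 2: evaluate the second equation at the two basis elements
  rw [hy₂, hy₁, map_sum, map_sum] at hd2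
  simp only [dT_single, jT_single, hdF, hjE] at hd2
  have key0 := congrArg (fun m : TModel t D => m (.x ⟨0, hD0⟩ 0 false)) hd2
  have key2 := congrArg (fun m : TModel t D => m (.x ⟨0, hD0⟩ 2 false)) hd2
  rw [Fin.sum_univ_four] at hS
  simp only [Finsupp.add_apply, Finset.sum_apply', Fin.sum_univ_four,
    Finsupp.smul_apply, Finsupp.single_apply, smul_eq_mul] at key0 key2
  norm_num [TBasis.x.injEq, Fin.ext_iff, show ((0:Fin 4) + 2 : Fin 4).1 = 2 by decide,
    show ((1:Fin 4) + 2 : Fin 4).1 = 3 by decide, show ((2:Fin 4) + 2 : Fin 4).1 = 0 by decide,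
    show ((3:Fin 4) + 2 : Fin 4).1 = 1 by decide,
    show ((0:Fin 4) + 1 : Fin 4).1 = 1 by decide, show ((1:Fin 4) + 1 : Fin 4).1 = 2 by decide,
    show ((2:Fin 4) + 1 : Fin 4).1 = 3 by decide,
    show ((3:Fin 4) + 1 : Fin 4).1 = 0 by decide] at key0 key2
  revert key0 key2 hS
  generalize y₁ (.x ⟨0, hD0⟩ 0 false) = l0
  generalize y₁ (.x ⟨0, hD0⟩ 1 false) = l1
  generalize y₁ (.x ⟨0, hD0⟩ 2 false) = l2
  generalize y₁ (.x ⟨0, hD0⟩ 3 false) = l3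
  generalize y₂ (.x ⟨0, hD0⟩ 0 true) = m0
  generalize y₂ (.x ⟨0, hD0⟩ 1 true) = m1
  generalize y₂ (.x ⟨0, hD0⟩ 2 true) = m2
  generalize y₂ (.x ⟨0, hD0⟩ 3 true) = m3
  revert l0 l1 l2 l3 m0 m1 m2 m3
  decide
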